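/- Let (H,R) be quasi-triangular, A braided commutative over (H,R), and F a normalized cocycle twist on H. Then the bialgebroid A_F⋊H^F obtained by the Brzeziński–Militaru construction from the twisted data (H^F, R^F, A_F) is isomorphic (as an A_F-bialgebroid, via φ(a⋊L) = (F̄₁▷a)⋊F̄₂L) to the bialgebroid (A⋊H)^F̃ obtained by Xu-twisting the Brzeziński–Militaru bialgebroid A⋊H by the lifted twist F̃ = (1_A⋊F₁)⊗_A(1_A⋊F₂); in particular (φ⊗_{A_F}φ)∘Δ̃^F = Δ̃_F̃∘φ, φ∘s^F = s_F̃, φ∘t^F = t_F̃, and ε̃∘φ = ε̃. -/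

import Mathlib

open TensorProduct


/-- Every element of a tensor product is a finite sum of pure tensors. -/
theorem exists_fin_rep {K M N : Type} [CommRing K] [AddCommGroup M] [Module K M]
    [AddCommGroup N] [Module K N] (z : M ⊗[K] N) :
    ∃ (n : ℕ) (u : Fin n → M) (v : Fin n → N), z = ∑ i, u i ⊗ₜ[K] v i := by
  obtain ⟨S, hS⟩ := TensorProduct.exists_finset z
  refine ⟨S.card, (fun j => (S.equivFin.symm j).1.1), (fun j => (S.equivFin.symm j).1.2), ?_⟩
  rw [hS, ← Finset.sum_attach S (fun p => p.1 ⊗ₜ[K] p.2)]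
  have : S.attach = (Finset.univ : Finset {x // x ∈ S}) := rfl
  rw [this, ← Equiv.sum_comp S.equivFin.symm (fun p => ((p : M × N)).1 ⊗ₜ[K] ((p : M × N)).2)]

section Maps
variable {K : Type} [CommRing K] {B C : Type} [Ring B] [Ring C] [Algebra K B] [Algebra K C]

theorem map_mulRight_mulRight (u : B) (v : C) :
    TensorProduct.map (LinearMap.mulRight K u) (LinearMap.mulRight K v)
      = LinearMap.mulRight K (u ⊗ₜ[K] v) := by
  apply TensorProduct.ext'
  intro x y
  simp [Algebra.TensorProduct.tmul_mul_tmul]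

theorem map_mulLeft_mulLeft (u : B) (v : C) :
    TensorProduct.map (LinearMap.mulLeft K u) (LinearMap.mulLeft K v)
      = LinearMap.mulLeft K (u ⊗ₜ[K] v) := by
  apply TensorProduct.ext'
  intro x y
  simp [Algebra.TensorProduct.tmul_mul_tmul]

theorem map_sum_left {M N P Q : Type} [AddCommGroup M] [Module K M] [AddCommGroup N] [Module K N]
    [AddCommGroup P] [Module K P] [AddCommGroup Q] [Module K Q]
    {ι : Type} (s : Finset ι) (f : ι → (M →ₗ[K] P)) (g : N →ₗ[K] Q) (z : M ⊗[K] N) :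
    TensorProduct.map (∑ i ∈ s, f i) g z = ∑ i ∈ s, TensorProduct.map (f i) g z := by
  rw [← TensorProduct.mapBilinear_apply]
  rw [map_sum (TensorProduct.mapBilinear (RingHom.id K) M N P Q)]
  simp [TensorProduct.mapBilinear_apply]

end Maps

/-- Embedding of `H ⊗ H` into the first and second factors of `H ⊗ H ⊗ H`. -/
noncomputable def leg12 (K H : Type) [CommRing K] [Ring H] [Algebra K H] :
    H ⊗[K] H →ₐ[K] H ⊗[K] (H ⊗[K] H) :=
  Algebra.TensorProduct.map (AlgHom.id K H) Algebra.TensorProduct.includeLeft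

/-- Embedding of `H ⊗ H` into the second and third factors of `H ⊗ H ⊗ H`. -/
noncomputable def leg23 (K H : Type) [CommRing K] [Ring H] [Algebra K H] :
    H ⊗[K] H →ₐ[K] H ⊗[K] (H ⊗[K] H) :=
  Algebra.TensorProduct.includeRight

/-- Embedding of `H ⊗ H` into the first and third factors of `H ⊗ H ⊗ H`. -/
noncomputable def leg13 (K H : Type) [CommRing K] [Ring H] [Algebra K H] :
    H ⊗[K] H →ₐ[K] H ⊗[K] (H ⊗[K] H) :=
  Algebra.TensorProduct.map (AlgHom.id K H) Algebra.TensorProduct.includeRight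

/-- `Δ ⊗ id` as a map `H ⊗ H → H ⊗ (H ⊗ H)`. -/
noncomputable def copL (K H : Type) [CommRing K] [Ring H] [Bialgebra K H] :
    H ⊗[K] H →ₗ[K] H ⊗[K] (H ⊗[K] H) :=
  (TensorProduct.assoc K H H H).toLinearMap ∘ₗ
    TensorProduct.map Coalgebra.comul LinearMap.id

/-- `id ⊗ Δ` as a map `H ⊗ H → H ⊗ (H ⊗ H)`. -/
noncomputable def copR (K H : Type) [CommRing K] [Ring H] [Bialgebra K H] :
    H ⊗[K] H →ₗ[K] H ⊗[K] (H ⊗[K] H) :=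
  TensorProduct.map LinearMap.id Coalgebra.comul

/-- `ε ⊗ id : H ⊗ H → H`. -/
noncomputable def ctL (K H : Type) [CommRing K] [Ring H] [Bialgebra K H] :
    H ⊗[K] H →ₗ[K] H :=
  (TensorProduct.lid K H).toLinearMap ∘ₗ TensorProduct.map Coalgebra.counit LinearMap.id

/-- `id ⊗ ε : H ⊗ H → H`. -/
noncomputable def ctR (K H : Type) [CommRing K] [Ring H] [Bialgebra K H] :
    H ⊗[K] H →ₗ[K] H :=
  (TensorProduct.rid K H).toLinearMap ∘ₗ TensorProduct.map LinearMap.id Coalgebra.counit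
section Bialg
variable (K H : Type) [CommRing K] [Ring H] [Bialgebra K H]

/-- `copL` as an algebra hom. -/
noncomputable def copLA : H ⊗[K] H →ₐ[K] H ⊗[K] (H ⊗[K] H) :=
  ((Algebra.TensorProduct.assoc K K K H H H).toAlgHom.comp
    (Algebra.TensorProduct.map (Bialgebra.comulAlgHom K H) (AlgHom.id K H)))

noncomputable def copRA : H ⊗[K] H →ₐ[K] H ⊗[K] (H ⊗[K] H) :=
  Algebra.TensorProduct.map (AlgHom.id K H) (Bialgebra.comulAlgHom K H)

noncomputable def ctLA : H ⊗[K] H →ₐ[K] H :=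
  ((Algebra.TensorProduct.lid K H).toAlgHom.comp
    (Algebra.TensorProduct.map (Bialgebra.counitAlgHom K H) (AlgHom.id K H)))

noncomputable def ctRA : H ⊗[K] H →ₐ[K] H :=
  ((Algebra.TensorProduct.rid K K H).toAlgHom.comp
    (Algebra.TensorProduct.map (AlgHom.id K H) (Bialgebra.counitAlgHom K H)))

theorem assoc_alg (x : (H ⊗[K] H) ⊗[K] H) :
    (TensorProduct.assoc K H H H) x = (Algebra.TensorProduct.assoc K K K H H H) x := by
  have : (TensorProduct.assoc K H H H).toLinearMap
      = (Algebra.TensorProduct.assoc K K K H H H).toLinearMap := by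
    apply TensorProduct.ext_threefold; intro x y z; simp
  exact LinearMap.congr_fun this x

theorem assoc_symm_alg (x : H ⊗[K] (H ⊗[K] H)) :
    (TensorProduct.assoc K H H H).symm x = (Algebra.TensorProduct.assoc K K K H H H).symm x := by
  rw [show (Algebra.TensorProduct.assoc K K K H H H).symm x
      = (TensorProduct.assoc K H H H).symm
        ((TensorProduct.assoc K H H H) ((Algebra.TensorProduct.assoc K K K H H H).symm x)) by
      simp, assoc_alg]
  simp

theorem copL_alg (x : H ⊗[K] H) : copL K H x = copLA K H x := by
  have : copL K H = (copLA K H).toLinearMap := by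
    apply TensorProduct.ext'; intro x y
    simp [copL, copLA, assoc_alg]
    rfl
  exact LinearMap.congr_fun this x

theorem copR_alg (x : H ⊗[K] H) : copR K H x = copRA K H x := by
  have : copR K H = (copRA K H).toLinearMap := by
    apply TensorProduct.ext'; intro x y; simp [copR, copRA]
  exact LinearMap.congr_fun this x

theorem ctL_alg (x : H ⊗[K] H) : ctL K H x = ctLA K H x := by
  have : ctL K H = (ctLA K H).toLinearMap := by
    apply TensorProduct.ext'; intro x y; simp [ctL, ctLA]
  exact LinearMap.congr_fun this x

theorem ctR_alg (x : H ⊗[K] H) : ctR K H x = ctRA K H x := by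
  have : ctR K H = (ctRA K H).toLinearMap := by
    apply TensorProduct.ext'; intro x y; simp [ctR, ctRA]
  exact LinearMap.congr_fun this x

theorem copL_mul (x y : H ⊗[K] H) : copL K H (x * y) = copL K H x * copL K H y := by
  rw [copL_alg, copL_alg, copL_alg, map_mul]

theorem copL_one : copL K H 1 = 1 := by rw [copL_alg, map_one]

theorem copR_mul (x y : H ⊗[K] H) : copR K H (x * y) = copR K H x * copR K H y := by
  rw [copR_alg, copR_alg, copR_alg, map_mul]

theorem copR_one : copR K H 1 = 1 := by rw [copR_alg, map_one]

theorem ctL_mul (x y : H ⊗[K] H) : ctL K H (x * y) = ctL K H x * ctL K H y := by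
  rw [ctL_alg, ctL_alg, ctL_alg, map_mul]

theorem ctL_one : ctL K H 1 = 1 := by rw [ctL_alg, map_one]

theorem ctR_mul (x y : H ⊗[K] H) : ctR K H (x * y) = ctR K H x * ctR K H y := by
  rw [ctR_alg, ctR_alg, ctR_alg, map_mul]

theorem ctR_one : ctR K H 1 = 1 := by rw [ctR_alg, map_one]

theorem comm_alg (x : H ⊗[K] H) :
    (TensorProduct.comm K H H) x = (Algebra.TensorProduct.comm K H H) x := by
  have : (TensorProduct.comm K H H).toLinearMap
      = (Algebra.TensorProduct.comm K H H).toLinearMap := by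
    apply TensorProduct.ext'; intro x y; simp
  exact LinearMap.congr_fun this x

theorem comm_mul (x y : H ⊗[K] H) :
    (TensorProduct.comm K H H) (x * y)
      = (TensorProduct.comm K H H) x * (TensorProduct.comm K H H) y := by
  rw [comm_alg, comm_alg, comm_alg, map_mul]

theorem comm_one : (TensorProduct.comm K H H) (1 : H ⊗[K] H) = 1 := by
  rw [comm_alg, map_one]

theorem counit_collapse_left {M : H} {n : ℕ} {u v : Fin n → H}
    (h : Coalgebra.comul (R := K) M = ∑ i, u i ⊗ₜ[K] v i) :
    ∑ i, Coalgebra.counit (R := K) (u i) • v i = M := by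
  have := congrArg (fun z => TensorProduct.lid K H
      (LinearMap.rTensor H (Coalgebra.counit (R := K)) z)) h
  simpa [Coalgebra.rTensor_counit_comul, map_sum] using this.symm

theorem counit_collapse_right {M : H} {n : ℕ} {u v : Fin n → H}
    (h : Coalgebra.comul (R := K) M = ∑ i, u i ⊗ₜ[K] v i) :
    ∑ i, Coalgebra.counit (R := K) (v i) • u i = M := by
  have := congrArg (fun z => TensorProduct.rid K H
      (LinearMap.lTensor H (Coalgebra.counit (R := K)) z)) h
  simpa [Coalgebra.lTensor_counit_comul, map_sum] using this.symm

theorem comul_mul (x y : H) :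
    Coalgebra.comul (R := K) (x * y)
      = Coalgebra.comul (R := K) x * Coalgebra.comul (R := K) y := by
  have := map_mul (Bialgebra.comulAlgHom K H) x y
  simpa using this

theorem counit_mul (x y : H) :
    Coalgebra.counit (R := K) (x * y)
      = Coalgebra.counit (R := K) x * Coalgebra.counit (R := K) y := by
  have := map_mul (Bialgebra.counitAlgHom K H) x y
  simpa using this

end Bialg


/-- The twisted star product `a ⋆_F b = (F̄₁ ▷ a) · (F̄₂ ▷ b)` determined by the
action `act` and the inverse twist `Finv`. -/
noncomputable def starF {K H A : Type} [CommRing K] [Ring H] [Bialgebra K H]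
    [Ring A] [Algebra K A]
    (act : H →ₗ[K] A →ₗ[K] A) (Finv : H ⊗[K] H) (a b : A) : A :=
  LinearMap.mul' K A ((TensorProduct.map (act.flip a) (act.flip b)) Finv)

/-- For `G = Σ G₁ ⊗ G₂ ∈ H ⊗ H`, the element `Σ (G₂ ▷ a) ⊗ G₁` of `A ⊗ H`
(e.g. the target map `t(a) = (R₂ ▷ a) ⋊ R₁` of the smash product bialgebroid). -/
noncomputable def tmap {K H A : Type} [CommRing K] [Ring H] [Bialgebra K H]
    [Ring A] [Algebra K A]
    (act : H →ₗ[K] A →ₗ[K] A) (a : A) (G : H ⊗[K] H) : A ⊗[K] H :=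
  (TensorProduct.comm K H A) ((TensorProduct.map LinearMap.id (act.flip a)) G)

/-- The bialgebroid counit `ε̃(a ⋊ L) = ε(L) a` of the smash product `A ⋊ H`. -/
noncomputable def epsSm (K H A : Type) [CommRing K] [Ring H] [Bialgebra K H]
    [Ring A] [Algebra K A] : A ⊗[K] H →ₗ[K] A :=
  (TensorProduct.rid K A).toLinearMap ∘ₗ TensorProduct.map LinearMap.id Coalgebra.counit

set_option maxHeartbeats 1000000 in
/-- main theorem: the Brzeziński–Militaru bialgebroid
`A_F ⋊ H^F` built from the twisted data `(H^F, R^F, A_F)` is isomorphic, via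
`φ(a ⋊ L) = (F̄₁ ▷ a) ⋊ F̄₂L`, to the Xu twist `(A ⋊ H)^F̃` of the bialgebroid
`A ⋊ H` by the lifted twist `F̃ = (1 ⋊ F₁) ⊗_A (1 ⋊ F₂)`: `φ` is an algebra
isomorphism of the total algebras intertwining sources, targets, counits and
(modulo the `⊗_{A_F}`-relations) the coproducts. -/
theorem twisted_bialgebroid_isomorphism
    {K H A : Type} [CommRing K] [Ring H] [Bialgebra K H] [Ring A] [Algebra K A]
    (act : H →ₗ[K] A →ₗ[K] A)
    (hact_one : ∀ a : A, act 1 a = a)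
    (hact_mul : ∀ (L J : H) (a : A), act (L * J) a = act L (act J a))
    (hact_unit : ∀ L : H, act L (1 : A) = Coalgebra.counit (R := K) L • (1 : A))
    (hact_alg : ∀ (L : H) (a b : A) (n : ℕ) (L1 L2 : Fin n → H),
      Coalgebra.comul (R := K) L = ∑ i, L1 i ⊗ₜ[K] L2 i →
      act L (a * b) = ∑ i, act (L1 i) a * act (L2 i) b)
    -- quasi-triangularity of (H, R)
    (R Rinv : H ⊗[K] H)
    (hR₁ : R * Rinv = 1) (hR₂ : Rinv * R = 1)
    (hRΔ : ∀ x : H,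
      R * Coalgebra.comul (R := K) x * Rinv =
        TensorProduct.comm K H H (Coalgebra.comul (R := K) x))
    (hhex₁ : copL K H R = leg13 K H R * leg23 K H R)
    (hhex₂ : copR K H R = leg13 K H R * leg12 K H R)
    (hRn₁ : ctL K H R = 1) (hRn₂ : ctR K H R = 1)
    -- A is braided commutative w.r.t. R
    (hbr : ∀ (a b : A) (n : ℕ) (r1 r2 : Fin n → H),
      R = ∑ i, r1 i ⊗ₜ[K] r2 i → a * b = ∑ i, act (r2 i) b * act (r1 i) a)
    -- F is a normalized cocycle twist
    (F Finv : H ⊗[K] H)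
    (hinv₁ : F * Finv = 1) (hinv₂ : Finv * F = 1)
    (hcoc : leg12 K H F * copL K H F = leg23 K H F * copR K H F)
    (hnorm₁ : ctL K H F = 1) (hnorm₂ : ctR K H F = 1)
    -- the smash product multiplication of A ⋊ H
    (m : (A ⊗[K] H) →ₗ[K] (A ⊗[K] H) →ₗ[K] (A ⊗[K] H))
    (hm : ∀ (a b : A) (L J : H) (n : ℕ) (L1 L2 : Fin n → H),
      Coalgebra.comul (R := K) L = ∑ i, L1 i ⊗ₜ[K] L2 i →
      m (a ⊗ₜ[K] L) (b ⊗ₜ[K] J) = ∑ i, (a * act (L1 i) b) ⊗ₜ[K] (L2 i * J))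
    -- the smash product multiplication of A_F ⋊ H^F
    (mF : (A ⊗[K] H) →ₗ[K] (A ⊗[K] H) →ₗ[K] (A ⊗[K] H))
    (hmF : ∀ (a b : A) (L J : H) (n : ℕ) (L1 L2 : Fin n → H),
      F * Coalgebra.comul (R := K) L * Finv = ∑ i, L1 i ⊗ₜ[K] L2 i →
      mF (a ⊗ₜ[K] L) (b ⊗ₜ[K] J) =
        ∑ i, starF act Finv a (act (L1 i) b) ⊗ₜ[K] (L2 i * J))
    -- the maps φ, ψ
    (φ ψ : A ⊗[K] H →ₗ[K] A ⊗[K] H)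
    (hφ : ∀ (a : A) (L : H) (n : ℕ) (g1 g2 : Fin n → H),
      Finv = ∑ i, g1 i ⊗ₜ[K] g2 i →
      φ (a ⊗ₜ[K] L) = ∑ i, act (g1 i) a ⊗ₜ[K] (g2 i * L))
    (hψ : ∀ (a : A) (L : H) (n : ℕ) (f1 f2 : Fin n → H),
      F = ∑ i, f1 i ⊗ₜ[K] f2 i →
      ψ (a ⊗ₜ[K] L) = ∑ i, act (f1 i) a ⊗ₜ[K] (f2 i * L))
    -- the (representatives of the) coproducts Δ̃ of A ⋊ H and Δ̃^F of A_F ⋊ H^F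
    (D DF : (A ⊗[K] H) →ₗ[K] (A ⊗[K] H) ⊗[K] (A ⊗[K] H))
    (hD : ∀ (a : A) (L : H) (n : ℕ) (L1 L2 : Fin n → H),
      Coalgebra.comul (R := K) L = ∑ i, L1 i ⊗ₜ[K] L2 i →
      D (a ⊗ₜ[K] L) = ∑ i, (a ⊗ₜ[K] L1 i) ⊗ₜ[K] ((1 : A) ⊗ₜ[K] L2 i))
    (hDF : ∀ (a : A) (L : H) (n : ℕ) (L1 L2 : Fin n → H),
      F * Coalgebra.comul (R := K) L * Finv = ∑ i, L1 i ⊗ₜ[K] L2 i →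
      DF (a ⊗ₜ[K] L) = ∑ i, (a ⊗ₜ[K] L1 i) ⊗ₜ[K] ((1 : A) ⊗ₜ[K] L2 i))
    -- the submodule defining ⊗_{A_F}, built from the Xu-twisted source
    -- s_F̃(b) = (F̄₁ ▷ b) ⋊ F̄₂ and target t_F̃(b) = (R₂F̄₂' ▷ b) ⋊ R₁F̄₁'
    (IF : Submodule K ((A ⊗[K] H) ⊗[K] (A ⊗[K] H)))
    (hIF : IF = Submodule.span K
      {z : (A ⊗[K] H) ⊗[K] (A ⊗[K] H) |
        ∃ (b : A) (x y : A ⊗[K] H),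
          z = (m (tmap act b (R * Finv)) x) ⊗ₜ[K] y -
              x ⊗ₜ[K] (m ((TensorProduct.map (act.flip b) LinearMap.id) Finv) y)}) :
    -- (1) φ is an isomorphism of the total algebras
    (∀ x y : A ⊗[K] H, φ (mF x y) = m (φ x) (φ y)) ∧
    φ ((1 : A) ⊗ₜ[K] (1 : H)) = (1 : A) ⊗ₜ[K] (1 : H) ∧
    (∀ x : A ⊗[K] H, ψ (φ x) = x) ∧ (∀ x : A ⊗[K] H, φ (ψ x) = x) ∧
    -- (2) φ ∘ s^F = s_F̃
    (∀ a : A, φ (a ⊗ₜ[K] (1 : H)) =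
      (TensorProduct.map (act.flip a) LinearMap.id) Finv) ∧
    -- (3) φ ∘ t^F = t_F̃, with t^F(a) = (R^F₂ ▷ a) ⋊ R^F₁, R^F = F₂₁ R F⁻¹
    (∀ a : A, φ (tmap act a (TensorProduct.comm K H H F * R * Finv)) =
      tmap act a (R * Finv)) ∧
    -- (4) ε̃ ∘ φ = ε̃
    (∀ x : A ⊗[K] H, epsSm K H A (φ x) = epsSm K H A x) ∧
    -- (5) (φ ⊗_{A_F} φ) ∘ Δ̃^F = Δ̃_F̃ ∘ φ, where
    --     Δ̃_F̃(z) = F̃^#(Δ̃(z) F̃⁻¹) = Σᵢⱼ ((1⋊F₁ⱼ)·z₍₁₎·(1⋊F̄₁ᵢ)) ⊗_{A_F} ((1⋊F₂ⱼ)·z₍₂₎·(1⋊F̄₂ᵢ))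
    (∀ (p : ℕ) (f1 f2 : Fin p → H), F = ∑ j, f1 j ⊗ₜ[K] f2 j →
      ∀ (q : ℕ) (g1 g2 : Fin q → H), Finv = ∑ i, g1 i ⊗ₜ[K] g2 i →
      ∀ x : A ⊗[K] H,
        IF.mkQ ((TensorProduct.map φ φ) (DF x)) =
          IF.mkQ (∑ j, ∑ i,
            (TensorProduct.map (m ((1 : A) ⊗ₜ[K] f1 j)) (m ((1 : A) ⊗ₜ[K] f2 j)))
              ((TensorProduct.map (m.flip ((1 : A) ⊗ₜ[K] g1 i))
                (m.flip ((1 : A) ⊗ₜ[K] g2 i))) (D (φ x))))) := by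
  classical
  -- fixed representations of F and Finv
  obtain ⟨pc, fc1, fc2, hFc⟩ := exists_fin_rep F
  obtain ⟨qc, gc1, gc2, hGc⟩ := exists_fin_rep Finv
  -- representation-free forms of the structure maps
  have hφ' : ∀ (c : A) (M : H), φ (c ⊗ₜ[K] M)
      = TensorProduct.map (act.flip c) (LinearMap.mulRight K M) Finv := by
    intro c M
    rw [hφ c M qc gc1 gc2 hGc, hGc, map_sum]
    simp
  have hψ' : ∀ (c : A) (M : H), ψ (c ⊗ₜ[K] M)
      = TensorProduct.map (act.flip c) (LinearMap.mulRight K M) F := by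
    intro c M
    rw [hψ c M pc fc1 fc2 hFc, hFc, map_sum]
    simp
  have hm' : ∀ (c d : A) (M N : H), m (c ⊗ₜ[K] M) (d ⊗ₜ[K] N)
      = TensorProduct.map (LinearMap.mulLeft K c ∘ₗ act.flip d) (LinearMap.mulRight K N)
          (Coalgebra.comul (R := K) M) := by
    intro c d M N
    obtain ⟨n, u, v, hu⟩ := exists_fin_rep (Coalgebra.comul (R := K) M)
    rw [hm c d M N n u v hu, hu, map_sum]
    simp
  have hD' : ∀ (c : A) (M : H), D (c ⊗ₜ[K] M)
      = TensorProduct.map (TensorProduct.mk K A H c) (TensorProduct.mk K A H 1)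
          (Coalgebra.comul (R := K) M) := by
    intro c M
    obtain ⟨n, u, v, hu⟩ := exists_fin_rep (Coalgebra.comul (R := K) M)
    rw [hD c M n u v hu, hu, map_sum]
    simp
  have hactP : ∀ (w : H) (x y : A), act w (x * y)
      = LinearMap.mul' K A (TensorProduct.map (act.flip x) (act.flip y)
          (Coalgebra.comul (R := K) w)) := by
    intro w x y
    obtain ⟨n, u, v, hu⟩ := exists_fin_rep (Coalgebra.comul (R := K) w)
    rw [hact_alg w x y n u v hu, hu, map_sum, map_sum]
    simp
  have hflip : ∀ (u : H) (x : A), act.flip (act u x) = act.flip x ∘ₗ LinearMap.mulRight K u := by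
    intro u x
    ext h
    exact (hact_mul h u x).symm
  have hstar : ∀ (x y : A), starF act Finv x y = ∑ i, act (gc1 i) x * act (gc2 i) y := by
    intro x y
    rw [starF, hGc, map_sum, map_sum]
    simp
  have hmulRightComp : ∀ (u v : H),
      LinearMap.mulRight K (u * v) = LinearMap.mulRight K v ∘ₗ LinearMap.mulRight K u := by
    intro u v; ext h; simp [mul_assoc]
  -- counit collapses for the fixed representation of Finv
  have hctLinv : ctL K H Finv = 1 := by
    have h1 := ctL_mul K H F Finv
    rw [hinv₁, hnorm₁, one_mul, ctL_one] at h1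
    exact h1.symm
  have hctRinv : ctR K H Finv = 1 := by
    have h1 := ctR_mul K H F Finv
    rw [hinv₁, hnorm₂, one_mul, ctR_one] at h1
    exact h1.symm
  have hcolL : ∑ i, Coalgebra.counit (R := K) (gc1 i) • gc2 i = (1 : H) := by
    have h2 : ctL K H Finv = ∑ i, Coalgebra.counit (R := K) (gc1 i) • gc2 i := by
      rw [hGc, map_sum]; simp [ctL]
    rw [← h2, hctLinv]
  have hcolR : ∑ i, Coalgebra.counit (R := K) (gc2 i) • gc1 i = (1 : H) := by
    have h2 : ctR K H Finv = ∑ i, Coalgebra.counit (R := K) (gc2 i) • gc1 i := by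
      rw [hGc, map_sum]; simp [ctR]
    rw [← h2, hctRinv]
  have hφone : ∀ M : H, φ ((1 : A) ⊗ₜ[K] M) = (1 : A) ⊗ₜ[K] M := by
    intro M
    rw [hφ 1 M qc gc1 gc2 hGc]
    calc ∑ i, act (gc1 i) 1 ⊗ₜ[K] (gc2 i * M)
        = ∑ i, (1 : A) ⊗ₜ[K] ((Coalgebra.counit (R := K) (gc1 i) • gc2 i) * M) := by
          refine Finset.sum_congr rfl fun i _ => ?_
          rw [hact_unit, TensorProduct.smul_tmul, smul_mul_assoc]
      _ = (1 : A) ⊗ₜ[K] ((∑ i, Coalgebra.counit (R := K) (gc1 i) • gc2 i) * M) := by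
          rw [← TensorProduct.tmul_sum, ← Finset.sum_mul]
      _ = (1 : A) ⊗ₜ[K] M := by rw [hcolL, one_mul]
  have hm_right : ∀ (c : A) (M g : H), m (c ⊗ₜ[K] M) ((1 : A) ⊗ₜ[K] g) = c ⊗ₜ[K] (M * g) := by
    intro c M g
    obtain ⟨n, u, v, hu⟩ := exists_fin_rep (Coalgebra.comul (R := K) M)
    rw [hm c 1 M g n u v hu]
    calc ∑ i, (c * act (u i) 1) ⊗ₜ[K] (v i * g)
        = ∑ i, c ⊗ₜ[K] ((Coalgebra.counit (R := K) (u i) • v i) * g) := by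
          refine Finset.sum_congr rfl fun i _ => ?_
          rw [hact_unit, mul_smul_comm, mul_one, TensorProduct.smul_tmul, smul_mul_assoc]
      _ = c ⊗ₜ[K] ((∑ i, Coalgebra.counit (R := K) (u i) • v i) * g) := by
          rw [← TensorProduct.tmul_sum, ← Finset.sum_mul]
      _ = c ⊗ₜ[K] (M * g) := by rw [counit_collapse_left K H hu]
  have hm_oneone : ∀ (f M : H), m ((1 : A) ⊗ₜ[K] f) ((1 : A) ⊗ₜ[K] M)
      = (1 : A) ⊗ₜ[K] (f * M) := by
    intro f M
    obtain ⟨n, u, v, hu⟩ := exists_fin_rep (Coalgebra.comul (R := K) f)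
    rw [hm 1 1 f M n u v hu]
    calc ∑ i, ((1 : A) * act (u i) 1) ⊗ₜ[K] (v i * M)
        = ∑ i, (1 : A) ⊗ₜ[K] ((Coalgebra.counit (R := K) (u i) • v i) * M) := by
          refine Finset.sum_congr rfl fun i _ => ?_
          rw [hact_unit, one_mul, TensorProduct.smul_tmul, smul_mul_assoc]
      _ = (1 : A) ⊗ₜ[K] ((∑ i, Coalgebra.counit (R := K) (u i) • v i) * M) := by
          rw [← TensorProduct.tmul_sum, ← Finset.sum_mul]
      _ = (1 : A) ⊗ₜ[K] (f * M) := by rw [counit_collapse_left K H hu]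
  -- ring identities in H ⊗ (H ⊗ H) derived from the cocycle condition
  have hcL2 : copL K H Finv * copL K H F = 1 := by rw [← copL_mul, hinv₂, copL_one]
  have hcR1 : copR K H F * copR K H Finv = 1 := by rw [← copR_mul, hinv₁, copR_one]
  have hl12 : leg12 K H Finv * leg12 K H F = 1 := by rw [← map_mul, hinv₂, map_one]
  have hkey : copL K H F = leg12 K H Finv * (leg23 K H F * copR K H F) := by
    rw [← hcoc, ← mul_assoc, hl12, one_mul]
  have hI2 : copL K H F * copR K H Finv = leg12 K H Finv * leg23 K H F := by
    calc copL K H F * copR K H Finv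
        = leg12 K H Finv * (leg23 K H F * (copR K H F * copR K H Finv)) := by
          rw [hkey, mul_assoc, mul_assoc]
      _ = leg12 K H Finv * leg23 K H F := by rw [hcR1, mul_one]
  have hI1 : copL K H Finv * leg12 K H Finv * leg23 K H F = copR K H Finv := by
    calc copL K H Finv * leg12 K H Finv * leg23 K H F
        = copL K H Finv * (copL K H F * copR K H Finv) := by rw [mul_assoc, ← hI2]
      _ = copL K H Finv * copL K H F * copR K H Finv := by rw [mul_assoc]
      _ = copR K H Finv := by rw [hcL2, one_mul]
  refine ⟨?_, ?_, ?_, ?_, ?_, ?_, ?_, ?_⟩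
  · -- (1) multiplicativity
    have key : ∀ (a : A) (L : H) (b : A) (J : H),
        φ (mF (a ⊗ₜ[K] L) (b ⊗ₜ[K] J)) = m (φ (a ⊗ₜ[K] L)) (φ (b ⊗ₜ[K] J)) := by
      intro a L b J
      obtain ⟨nX, X1, X2, hX⟩ := exists_fin_rep (F * Coalgebra.comul (R := K) L * Finv)
      set Θ : (H ⊗[K] H) ⊗[K] H →ₗ[K] A ⊗[K] H :=
        TensorProduct.map (LinearMap.mul' K A ∘ₗ TensorProduct.map (act.flip a) (act.flip b))
          (LinearMap.mulRight K J) with hΘ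
      have hassocmul : ∀ (α β : (H ⊗[K] H) ⊗[K] H),
          (TensorProduct.assoc K H H H) α * (TensorProduct.assoc K H H H) β
            = (TensorProduct.assoc K H H H) (α * β) := by
        intro α β
        rw [assoc_alg, assoc_alg, assoc_alg, ← map_mul]
      have hB1 : ∀ (u : H) (z : H ⊗[K] H),
          TensorProduct.map (LinearMap.mulLeft K (act u a) ∘ₗ act.flip b)
              (LinearMap.mulRight K J) z
            = Θ ((TensorProduct.assoc K H H H).symm (u ⊗ₜ[K] z)) := by
        intro u z
        have heq : TensorProduct.map (LinearMap.mulLeft K (act u a) ∘ₗ act.flip b)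
              (LinearMap.mulRight K J)
            = (Θ ∘ₗ (TensorProduct.assoc K H H H).symm.toLinearMap)
                ∘ₗ TensorProduct.mk K H (H ⊗[K] H) u := by
          apply TensorProduct.ext'
          intro z1 z2
          simp [hΘ, TensorProduct.assoc_symm_tmul]
        exact LinearMap.congr_fun heq z
      -- the two ring elements
      have hringL : (TensorProduct.assoc K H H H).symm
            (copL K H Finv * leg12 K H Finv * leg23 K H (F * Coalgebra.comul (R := K) L * Finv))
          = ∑ w, ∑ h', ∑ h,
              (Coalgebra.comul (R := K) (gc1 h) * (gc1 h' ⊗ₜ[K] (gc2 h' * X1 w)))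
                ⊗ₜ[K] (gc2 h * X2 w) := by
        have e1 : copL K H Finv = ∑ h, (TensorProduct.assoc K H H H)
            ((Coalgebra.comul (R := K) (gc1 h)) ⊗ₜ[K] gc2 h) := by
          rw [hGc, map_sum]; simp [copL]
        have e2 : leg12 K H Finv = ∑ h', (TensorProduct.assoc K H H H)
            ((gc1 h' ⊗ₜ[K] gc2 h') ⊗ₜ[K] (1 : H)) := by
          rw [hGc, map_sum]; simp [leg12]
        have e3 : leg23 K H (F * Coalgebra.comul (R := K) L * Finv)
            = ∑ w, (TensorProduct.assoc K H H H) (((1 : H) ⊗ₜ[K] X1 w) ⊗ₜ[K] X2 w) := by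
          rw [hX, map_sum]; simp [leg23]
        rw [e1, e2, e3]
        simp only [Finset.sum_mul, Finset.mul_sum, hassocmul, map_sum,
          LinearEquiv.symm_apply_apply, mul_assoc, Algebra.TensorProduct.tmul_mul_tmul,
          mul_one, one_mul]
      have hringR : (TensorProduct.assoc K H H H).symm
            (copR K H Finv * leg23 K H (Coalgebra.comul (R := K) L * Finv))
          = ∑ h, (TensorProduct.assoc K H H H).symm
              (gc1 h ⊗ₜ[K] (Coalgebra.comul (R := K) (gc2 h)
                * (Coalgebra.comul (R := K) L * Finv))) := by
        have e4 : copR K H Finv = ∑ h, gc1 h ⊗ₜ[K] Coalgebra.comul (R := K) (gc2 h) := by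
          rw [hGc, map_sum]; simp [copR]
        rw [e4, Finset.sum_mul, map_sum]
        refine Finset.sum_congr rfl fun h _ => ?_
        rw [show (leg23 K H) (Coalgebra.comul (R := K) L * Finv)
            = (1 : H) ⊗ₜ[K] (Coalgebra.comul (R := K) L * Finv) from rfl,
          Algebra.TensorProduct.tmul_mul_tmul, mul_one]
      -- the ring identity
      have hring : copL K H Finv * leg12 K H Finv
            * leg23 K H (F * Coalgebra.comul (R := K) L * Finv)
          = copR K H Finv * leg23 K H (Coalgebra.comul (R := K) L * Finv) := by
        have e5 : leg23 K H (F * Coalgebra.comul (R := K) L * Finv)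
            = leg23 K H F * leg23 K H (Coalgebra.comul (R := K) L * Finv) := by
          rw [mul_assoc, map_mul]
        rw [e5, ← mul_assoc, hI1]
      -- LHS computation
      have hLHS : φ (mF (a ⊗ₜ[K] L) (b ⊗ₜ[K] J))
          = ∑ w, ∑ h, ∑ h', Θ ((Coalgebra.comul (R := K) (gc1 h)
              * (gc1 h' ⊗ₜ[K] (gc2 h' * X1 w))) ⊗ₜ[K] (gc2 h * X2 w)) := by
        rw [hmF a b L J nX X1 X2 hX, map_sum]
        refine Finset.sum_congr rfl fun w _ => ?_
        rw [hφ _ _ qc gc1 gc2 hGc]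
        refine Finset.sum_congr rfl fun h _ => ?_
        rw [hstar, map_sum, TensorProduct.sum_tmul]
        refine Finset.sum_congr rfl fun h' _ => ?_
        rw [← hact_mul (gc2 h') (X1 w) b,
          hactP (gc1 h) (act (gc1 h') a) (act (gc2 h' * X1 w) b),
          hflip (gc1 h') a, hflip (gc2 h' * X1 w) b, TensorProduct.map_comp,
          LinearMap.comp_apply, map_mulRight_mulRight, LinearMap.mulRight_apply]
        simp [hΘ, mul_assoc]
      -- RHS computation
      have hRHS : m (φ (a ⊗ₜ[K] L)) (φ (b ⊗ₜ[K] J))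
          = ∑ h, Θ ((TensorProduct.assoc K H H H).symm
              (gc1 h ⊗ₜ[K] (Coalgebra.comul (R := K) (gc2 h)
                * (Coalgebra.comul (R := K) L * Finv)))) := by
        have hbil : ∀ (u v : Fin qc → A ⊗[K] H),
            m (∑ k, u k) (∑ i, v i) = ∑ k, ∑ i, m (u k) (v i) := by
          intro u v
          have h1 : m (∑ k, u k) = ∑ k, m (u k) := map_sum m u Finset.univ
          rw [h1, LinearMap.sum_apply]
          exact Finset.sum_congr rfl fun k _ => map_sum (m (u k)) v Finset.univ
        rw [hφ a L qc gc1 gc2 hGc, hφ b J qc gc1 gc2 hGc, hbil]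
        refine Finset.sum_congr rfl fun h _ => ?_
        have hterm : ∀ i, m (act (gc1 h) a ⊗ₜ[K] (gc2 h * L)) (act (gc1 i) b ⊗ₜ[K] (gc2 i * J))
            = TensorProduct.map (LinearMap.mulLeft K (act (gc1 h) a) ∘ₗ act.flip b)
                (LinearMap.mulRight K J)
                ((Coalgebra.comul (R := K) (gc2 h) * Coalgebra.comul (R := K) L)
                  * (gc1 i ⊗ₜ[K] gc2 i)) := by
          intro i
          rw [hm', comul_mul K H, hflip (gc1 i) b, hmulRightComp (gc2 i) J,
            ← LinearMap.comp_assoc, TensorProduct.map_comp, LinearMap.comp_apply,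
            map_mulRight_mulRight, LinearMap.mulRight_apply]
        rw [Finset.sum_congr rfl fun i _ => hterm i, ← map_sum, ← Finset.mul_sum, ← hGc,
          mul_assoc, hB1]
      rw [hLHS, hRHS]
      rw [Finset.sum_congr rfl fun w (_ : w ∈ Finset.univ) => Finset.sum_comm]
      rw [show (∑ w, ∑ h', ∑ h, Θ ((Coalgebra.comul (R := K) (gc1 h)
          * (gc1 h' ⊗ₜ[K] (gc2 h' * X1 w))) ⊗ₜ[K] (gc2 h * X2 w)))
        = Θ (∑ w, ∑ h', ∑ h, (Coalgebra.comul (R := K) (gc1 h)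
          * (gc1 h' ⊗ₜ[K] (gc2 h' * X1 w))) ⊗ₜ[K] (gc2 h * X2 w)) by simp [map_sum]]
      rw [show (∑ h, Θ ((TensorProduct.assoc K H H H).symm
          (gc1 h ⊗ₜ[K] (Coalgebra.comul (R := K) (gc2 h)
            * (Coalgebra.comul (R := K) L * Finv)))))
        = Θ (∑ h, (TensorProduct.assoc K H H H).symm
          (gc1 h ⊗ₜ[K] (Coalgebra.comul (R := K) (gc2 h)
            * (Coalgebra.comul (R := K) L * Finv)))) by simp [map_sum]]
      rw [← hringL, ← hringR, hring]
    intro x y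
    induction x using TensorProduct.induction_on with
    | zero => simp
    | tmul a L =>
      induction y using TensorProduct.induction_on with
      | zero => simp
      | tmul b J => exact key a L b J
      | add y1 y2 h1 h2 => simp only [map_add, h1, h2]
    | add x1 x2 h1 h2 => simp only [map_add, LinearMap.add_apply, h1, h2]
  · -- (2) unitality
    exact hφone 1
  · -- (3) ψ ∘ φ = id
    intro x
    induction x using TensorProduct.induction_on with
    | zero => simp
    | tmul c M =>
      rw [hφ c M qc gc1 gc2 hGc, map_sum]
      have hterm : ∀ i, ψ (act (gc1 i) c ⊗ₜ[K] (gc2 i * M))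
          = TensorProduct.map (act.flip c) (LinearMap.mulRight K M) (F * (gc1 i ⊗ₜ[K] gc2 i)) := by
        intro i
        rw [hψ', hflip, hmulRightComp, TensorProduct.map_comp, LinearMap.comp_apply,
          map_mulRight_mulRight, LinearMap.mulRight_apply]
      rw [Finset.sum_congr rfl fun i _ => hterm i, ← map_sum, ← Finset.mul_sum, ← hGc, hinv₁,
        Algebra.TensorProduct.one_def]
      simp [hact_one]
    | add x y hx hy => rw [map_add, map_add, hx, hy]
  · -- (4) φ ∘ ψ = id
    intro x
    induction x using TensorProduct.induction_on with
    | zero => simp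
    | tmul c M =>
      rw [hψ c M pc fc1 fc2 hFc, map_sum]
      have hterm : ∀ i, φ (act (fc1 i) c ⊗ₜ[K] (fc2 i * M))
          = TensorProduct.map (act.flip c) (LinearMap.mulRight K M) (Finv * (fc1 i ⊗ₜ[K] fc2 i)) := by
        intro i
        rw [hφ', hflip, hmulRightComp, TensorProduct.map_comp, LinearMap.comp_apply,
          map_mulRight_mulRight, LinearMap.mulRight_apply]
      rw [Finset.sum_congr rfl fun i _ => hterm i, ← map_sum, ← Finset.mul_sum, ← hFc, hinv₂,
        Algebra.TensorProduct.one_def]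
      simp [hact_one]
    | add x y hx hy => rw [map_add, map_add, hx, hy]
  · -- (5) sources
    intro a
    rw [hφ' a 1]
    have : LinearMap.mulRight K (1 : H) = (LinearMap.id : H →ₗ[K] H) := by ext h; simp
    rw [this]
  · -- (6) targets
    intro a
    obtain ⟨nG, u, v, hGr⟩ := exists_fin_rep (TensorProduct.comm K H H F * R * Finv)
    have hcomm : TensorProduct.comm K H H Finv * (TensorProduct.comm K H H F * R * Finv)
        = R * Finv := by
      calc TensorProduct.comm K H H Finv * (TensorProduct.comm K H H F * R * Finv)
          = (TensorProduct.comm K H H Finv * TensorProduct.comm K H H F) * R * Finv := by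
            rw [← mul_assoc, ← mul_assoc]
        _ = R * Finv := by rw [← comm_mul, hinv₂, comm_one, one_mul]
    have hcommFinv : TensorProduct.comm K H H Finv = ∑ h, gc2 h ⊗ₜ[K] gc1 h := by
      rw [hGc, map_sum]; simp
    have hLHS : φ (tmap act a (TensorProduct.comm K H H F * R * Finv))
        = ∑ w, ∑ h, act (gc1 h * v w) a ⊗ₜ[K] (gc2 h * u w) := by
      have htm : tmap act a (TensorProduct.comm K H H F * R * Finv)
          = ∑ w, act (v w) a ⊗ₜ[K] u w := by
        rw [tmap, hGr, map_sum, map_sum]; simp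
      rw [htm, map_sum]
      refine Finset.sum_congr rfl fun w _ => ?_
      rw [hφ (act (v w) a) (u w) qc gc1 gc2 hGc]
      exact Finset.sum_congr rfl fun h _ => by rw [hact_mul]
    have hRHS : tmap act a (R * Finv)
        = ∑ h, ∑ w, act (gc1 h * v w) a ⊗ₜ[K] (gc2 h * u w) := by
      rw [← hcomm, tmap, hcommFinv, hGr, Finset.sum_mul_sum, map_sum, map_sum]
      refine Finset.sum_congr rfl fun h _ => ?_
      rw [map_sum, map_sum]
      refine Finset.sum_congr rfl fun w _ => ?_
      simp [Algebra.TensorProduct.tmul_mul_tmul]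
    rw [hLHS, hRHS, Finset.sum_comm]
  · -- (7) counits
    intro x
    have heps : ∀ (d : A) (N : H), epsSm K H A (d ⊗ₜ[K] N)
        = Coalgebra.counit (R := K) N • d := by
      intro d N; simp [epsSm]
    induction x using TensorProduct.induction_on with
    | zero => simp
    | tmul c M =>
      rw [hφ c M qc gc1 gc2 hGc, map_sum, heps c M]
      calc ∑ h, epsSm K H A (act (gc1 h) c ⊗ₜ[K] (gc2 h * M))
          = ∑ h, Coalgebra.counit (R := K) M
              • (Coalgebra.counit (R := K) (gc2 h) • act (gc1 h) c) := by
            refine Finset.sum_congr rfl fun h _ => ?_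
            rw [heps, counit_mul K H, mul_comm, mul_smul]
        _ = Coalgebra.counit (R := K) M
              • act (∑ h, Coalgebra.counit (R := K) (gc2 h) • gc1 h) c := by
            rw [← Finset.smul_sum]
            congr 1
            rw [map_sum, LinearMap.sum_apply]
            exact Finset.sum_congr rfl fun h _ => by rw [map_smul, LinearMap.smul_apply]
        _ = Coalgebra.counit (R := K) M • c := by rw [hcolR, hact_one]
    | add x y hx hy => rw [map_add, map_add, hx, hy, ← map_add]
  · -- (8) coproducts
    intro p8 f81 f82 hF8 q8 g81 g82 hG8 x
    suffices hS : (TensorProduct.map φ φ) (DF x) = ∑ j, ∑ i,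
        (TensorProduct.map (m ((1 : A) ⊗ₜ[K] f81 j)) (m ((1 : A) ⊗ₜ[K] f82 j)))
          ((TensorProduct.map (m.flip ((1 : A) ⊗ₜ[K] g81 i))
            (m.flip ((1 : A) ⊗ₜ[K] g82 i))) (D (φ x))) by rw [hS]
    induction x using TensorProduct.induction_on with
    | zero => simp
    | add x1 x2 h1 h2 => simp only [map_add, h1, h2, Finset.sum_add_distrib]
    | tmul a L =>
      choose ne e1 e2 he using fun j : Fin p8 => exists_fin_rep (Coalgebra.comul (R := K) (f81 j))
      obtain ⟨nX, X1, X2, hX⟩ := exists_fin_rep (F * Coalgebra.comul (R := K) L * Finv)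
      set Ξ : H ⊗[K] (H ⊗[K] H) →ₗ[K] (A ⊗[K] H) ⊗[K] (A ⊗[K] H) :=
        (TensorProduct.map (TensorProduct.map (act.flip a) LinearMap.id)
            (TensorProduct.mk K A H 1))
          ∘ₗ (TensorProduct.assoc K H H H).symm.toLinearMap with hΞ
    -- bridging lemma
      have hB3 : ∀ (u : H) (z : H ⊗[K] H),
          TensorProduct.map (TensorProduct.mk K A H (act u a)) (TensorProduct.mk K A H 1) z
            = Ξ (u ⊗ₜ[K] z) := by
        intro u z
        have heq : TensorProduct.map (TensorProduct.mk K A H (act u a))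
              (TensorProduct.mk K A H (1 : A))
            = Ξ ∘ₗ TensorProduct.mk K H (H ⊗[K] H) u := by
          apply TensorProduct.ext'
          intro z1 z2
          simp [hΞ, TensorProduct.assoc_symm_tmul]
        exact LinearMap.congr_fun heq z
      have hcopLt : ∀ j, copL K H (f81 j ⊗ₜ[K] f82 j)
          = ∑ s, e1 j s ⊗ₜ[K] (e2 j s ⊗ₜ[K] f82 j) := by
        intro j
        have : copL K H (f81 j ⊗ₜ[K] f82 j)
            = (TensorProduct.assoc K H H H) ((Coalgebra.comul (R := K) (f81 j)) ⊗ₜ[K] f82 j) := by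
          simp [copL]
        rw [this, he j, TensorProduct.sum_tmul, map_sum]
        simp
      -- LHS
      have hLHS : (TensorProduct.map φ φ) (DF (a ⊗ₜ[K] L))
          = Ξ (leg12 K H Finv * leg23 K H (F * Coalgebra.comul (R := K) L * Finv)) := by
        rw [hDF a L nX X1 X2 hX, map_sum]
        have hterm : ∀ w, (TensorProduct.map φ φ) ((a ⊗ₜ[K] X1 w) ⊗ₜ[K] ((1 : A) ⊗ₜ[K] X2 w))
            = ∑ h, Ξ (gc1 h ⊗ₜ[K] ((gc2 h * X1 w) ⊗ₜ[K] X2 w)) := by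
          intro w
          rw [TensorProduct.map_tmul, hφone, hφ a (X1 w) qc gc1 gc2 hGc,
            TensorProduct.sum_tmul]
          refine Finset.sum_congr rfl fun h _ => ?_
          simp [hΞ, TensorProduct.assoc_symm_tmul]
        rw [Finset.sum_congr rfl fun w _ => hterm w]
        have hexp : leg12 K H Finv * leg23 K H (F * Coalgebra.comul (R := K) L * Finv)
            = ∑ h, ∑ w, gc1 h ⊗ₜ[K] ((gc2 h * X1 w) ⊗ₜ[K] X2 w) := by
          rw [hX, hGc, map_sum, map_sum, Finset.sum_mul_sum]
          refine Finset.sum_congr rfl fun h _ => Finset.sum_congr rfl fun w _ => ?_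
          simp [leg12, leg23, Algebra.TensorProduct.tmul_mul_tmul]
        rw [hexp, Finset.sum_comm]
        simp [map_sum]
      -- RHS pieces
      have hDφx : D (φ (a ⊗ₜ[K] L)) = ∑ h,
          (TensorProduct.map (TensorProduct.mk K A H (act (gc1 h) a))
            (TensorProduct.mk K A H 1))
            (Coalgebra.comul (R := K) (gc2 h) * Coalgebra.comul (R := K) L) := by
        rw [hφ a L qc gc1 gc2 hGc, map_sum]
        exact Finset.sum_congr rfl fun h _ => by rw [hD', comul_mul K H]
      have hinner : ∀ (i : Fin q8) (h : Fin qc),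
          (TensorProduct.map (m.flip ((1 : A) ⊗ₜ[K] g81 i)) (m.flip ((1 : A) ⊗ₜ[K] g82 i)))
            ((TensorProduct.map (TensorProduct.mk K A H (act (gc1 h) a))
              (TensorProduct.mk K A H 1))
              (Coalgebra.comul (R := K) (gc2 h) * Coalgebra.comul (R := K) L))
          = (TensorProduct.map (TensorProduct.mk K A H (act (gc1 h) a))
              (TensorProduct.mk K A H 1))
              (Coalgebra.comul (R := K) (gc2 h) * Coalgebra.comul (R := K) L
                * (g81 i ⊗ₜ[K] g82 i)) := by
        intro i h
        rw [← LinearMap.comp_apply, ← TensorProduct.map_comp]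
        have c1 : m.flip ((1 : A) ⊗ₜ[K] g81 i) ∘ₗ TensorProduct.mk K A H (act (gc1 h) a)
            = TensorProduct.mk K A H (act (gc1 h) a) ∘ₗ LinearMap.mulRight K (g81 i) := by
          apply LinearMap.ext; intro M
          simp only [LinearMap.comp_apply, TensorProduct.mk_apply, LinearMap.flip_apply,
            LinearMap.mulRight_apply]
          exact hm_right _ M _
        have c2 : m.flip ((1 : A) ⊗ₜ[K] g82 i) ∘ₗ TensorProduct.mk K A H (1 : A)
            = TensorProduct.mk K A H (1 : A) ∘ₗ LinearMap.mulRight K (g82 i) := by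
          apply LinearMap.ext; intro M
          simp only [LinearMap.comp_apply, TensorProduct.mk_apply, LinearMap.flip_apply,
            LinearMap.mulRight_apply]
          exact hm_right _ M _
        rw [c1, c2, TensorProduct.map_comp, LinearMap.comp_apply, map_mulRight_mulRight,
          LinearMap.mulRight_apply]
      have houter : ∀ (j : Fin p8) (h : Fin qc) (z : H ⊗[K] H),
          (TensorProduct.map (m ((1 : A) ⊗ₜ[K] f81 j)) (m ((1 : A) ⊗ₜ[K] f82 j)))
            ((TensorProduct.map (TensorProduct.mk K A H (act (gc1 h) a))
              (TensorProduct.mk K A H 1)) z)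
          = Ξ (copL K H (f81 j ⊗ₜ[K] f82 j) * (gc1 h ⊗ₜ[K] z)) := by
        intro j h z
        rw [← LinearMap.comp_apply, ← TensorProduct.map_comp]
        have c3 : m ((1 : A) ⊗ₜ[K] f81 j) ∘ₗ TensorProduct.mk K A H (act (gc1 h) a)
            = ∑ s, TensorProduct.mk K A H (act (e1 j s * gc1 h) a)
                ∘ₗ LinearMap.mulLeft K (e2 j s) := by
          apply LinearMap.ext; intro M
          simp only [LinearMap.comp_apply, TensorProduct.mk_apply, LinearMap.sum_apply,
            LinearMap.mulLeft_apply]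
          rw [hm 1 (act (gc1 h) a) (f81 j) M (ne j) (e1 j) (e2 j) (he j)]
          exact Finset.sum_congr rfl fun s _ => by rw [one_mul, hact_mul]
        have c4 : m ((1 : A) ⊗ₜ[K] f82 j) ∘ₗ TensorProduct.mk K A H (1 : A)
            = TensorProduct.mk K A H (1 : A) ∘ₗ LinearMap.mulLeft K (f82 j) := by
          apply LinearMap.ext; intro M
          simp only [LinearMap.comp_apply, TensorProduct.mk_apply, LinearMap.mulLeft_apply]
          exact hm_oneone _ M
        rw [c3, c4, map_sum_left]
        have hterm : ∀ s, TensorProduct.map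
              (TensorProduct.mk K A H (act (e1 j s * gc1 h) a) ∘ₗ LinearMap.mulLeft K (e2 j s))
              (TensorProduct.mk K A H (1 : A) ∘ₗ LinearMap.mulLeft K (f82 j)) z
            = Ξ ((e1 j s ⊗ₜ[K] (e2 j s ⊗ₜ[K] f82 j)) * (gc1 h ⊗ₜ[K] z)) := by
          intro s
          rw [TensorProduct.map_comp, LinearMap.comp_apply, map_mulLeft_mulLeft,
            LinearMap.mulLeft_apply, hB3, Algebra.TensorProduct.tmul_mul_tmul]
        rw [Finset.sum_congr rfl fun s _ => hterm s, ← map_sum, ← Finset.sum_mul, ← hcopLt]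
      -- assemble the right-hand side
      have hRHS : (∑ j, ∑ i,
            (TensorProduct.map (m ((1 : A) ⊗ₜ[K] f81 j)) (m ((1 : A) ⊗ₜ[K] f82 j)))
              ((TensorProduct.map (m.flip ((1 : A) ⊗ₜ[K] g81 i))
                (m.flip ((1 : A) ⊗ₜ[K] g82 i))) (D (φ (a ⊗ₜ[K] L)))))
          = Ξ (copL K H F * (copR K H Finv
              * leg23 K H (Coalgebra.comul (R := K) L * Finv))) := by
        have e4 : copR K H Finv = ∑ h, gc1 h ⊗ₜ[K] Coalgebra.comul (R := K) (gc2 h) := by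
          rw [hGc, map_sum]; simp [copR]
        have hstep : ∀ j, ∑ i : Fin q8, ∑ h,
              Ξ (copL K H (f81 j ⊗ₜ[K] f82 j)
                * (gc1 h ⊗ₜ[K] (Coalgebra.comul (R := K) (gc2 h) * Coalgebra.comul (R := K) L
                  * (g81 i ⊗ₜ[K] g82 i))))
            = Ξ (copL K H (f81 j ⊗ₜ[K] f82 j) * (copR K H Finv
                * leg23 K H (Coalgebra.comul (R := K) L * Finv))) := by
          intro j
          have hin : ∀ i : Fin q8, ∑ h, gc1 h ⊗ₜ[K] (Coalgebra.comul (R := K) (gc2 h)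
                * Coalgebra.comul (R := K) L * (g81 i ⊗ₜ[K] g82 i))
              = copR K H Finv * ((1 : H) ⊗ₜ[K] (Coalgebra.comul (R := K) L
                  * (g81 i ⊗ₜ[K] g82 i))) := by
            intro i
            rw [e4, Finset.sum_mul]
            refine Finset.sum_congr rfl fun h _ => ?_
            rw [Algebra.TensorProduct.tmul_mul_tmul, mul_one, mul_assoc]
          calc ∑ i : Fin q8, ∑ h,
              Ξ (copL K H (f81 j ⊗ₜ[K] f82 j)
                * (gc1 h ⊗ₜ[K] (Coalgebra.comul (R := K) (gc2 h) * Coalgebra.comul (R := K) L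
                  * (g81 i ⊗ₜ[K] g82 i))))
              = ∑ i : Fin q8, Ξ (copL K H (f81 j ⊗ₜ[K] f82 j) * (copR K H Finv
                  * ((1 : H) ⊗ₜ[K] (Coalgebra.comul (R := K) L * (g81 i ⊗ₜ[K] g82 i))))) := by
                refine Finset.sum_congr rfl fun i _ => ?_
                rw [← map_sum, ← Finset.mul_sum, hin i]
            _ = Ξ (copL K H (f81 j ⊗ₜ[K] f82 j) * (copR K H Finv
                * leg23 K H (Coalgebra.comul (R := K) L * Finv))) := by
                rw [← map_sum, ← Finset.mul_sum, ← Finset.mul_sum, ← TensorProduct.tmul_sum,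
                  ← Finset.mul_sum, ← hG8]
                rfl
        calc (∑ j, ∑ i,
            (TensorProduct.map (m ((1 : A) ⊗ₜ[K] f81 j)) (m ((1 : A) ⊗ₜ[K] f82 j)))
              ((TensorProduct.map (m.flip ((1 : A) ⊗ₜ[K] g81 i))
                (m.flip ((1 : A) ⊗ₜ[K] g82 i))) (D (φ (a ⊗ₜ[K] L)))))
            = ∑ j, ∑ i : Fin q8, ∑ h,
              Ξ (copL K H (f81 j ⊗ₜ[K] f82 j)
                * (gc1 h ⊗ₜ[K] (Coalgebra.comul (R := K) (gc2 h) * Coalgebra.comul (R := K) L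
                  * (g81 i ⊗ₜ[K] g82 i)))) := by
              refine Finset.sum_congr rfl fun j _ => Finset.sum_congr rfl fun i _ => ?_
              rw [hDφx, map_sum, Finset.sum_congr rfl fun h _ => hinner i h, map_sum]
              exact Finset.sum_congr rfl fun h _ => houter j h _
          _ = ∑ j, Ξ (copL K H (f81 j ⊗ₜ[K] f82 j) * (copR K H Finv
                * leg23 K H (Coalgebra.comul (R := K) L * Finv))) :=
              Finset.sum_congr rfl fun j _ => hstep j
          _ = Ξ (copL K H F * (copR K H Finv
                * leg23 K H (Coalgebra.comul (R := K) L * Finv))) := by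
              rw [← map_sum, ← Finset.sum_mul, ← map_sum, ← hF8]
      rw [hLHS, hRHS]
      congr 1
      symm
      calc copL K H F * (copR K H Finv * leg23 K H (Coalgebra.comul (R := K) L * Finv))
          = (copL K H F * copR K H Finv) * leg23 K H (Coalgebra.comul (R := K) L * Finv) :=
            (mul_assoc _ _ _).symm
        _ = leg12 K H Finv * leg23 K H F
              * leg23 K H (Coalgebra.comul (R := K) L * Finv) := by rw [hI2]
        _ = leg12 K H Finv * leg23 K H (F * (Coalgebra.comul (R := K) L * Finv)) := by
            rw [mul_assoc, ← map_mul]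
        _ = leg12 K H Finv * leg23 K H (F * Coalgebra.comul (R := K) L * Finv) := by
            rw [show F * (Coalgebra.comul (R := K) L * Finv)
              = F * Coalgebra.comul (R := K) L * Finv from (mul_assoc _ _ _).symm]
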